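/- In the setting of (d+1)-dimensional metabelian ℤ_p-Lie lattices L, M with good bases and matrices A, B: if the matrix F̄ of a module homomorphism φ : M → L satisfies F_{0i} = 0 for all i ∈ {1,...,d}, then φ is a Lie algebra homomorphism if and only if F B = F₀₀ A F, where F = (F_{ij})_{1 ≤ i,j ≤ d}. -/

import Mathlib

private theorem my_sum_lie {R : Type*} [LieRing R] {ι : Type*} (s : Finset ι)
    (f : ι → R) (y : R) : ⁅∑ i ∈ s, f i, y⁆ = ∑ i ∈ s, ⁅f i, y⁆ := by
  induction s using Finset.cons_induction with
  | empty => simp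
  | cons a s ha ih => simp [Finset.sum_cons, add_lie, ih]

private theorem my_lie_sum {R : Type*} [LieRing R] {ι : Type*} (s : Finset ι)
    (f : ι → R) (y : R) : ⁅y, ∑ i ∈ s, f i⁆ = ∑ i ∈ s, ⁅y, f i⁆ := by
  induction s using Finset.cons_induction with
  | empty => simp
  | cons a s ha ih => simp [Finset.sum_cons, lie_add, ih]

/-- In the setting of `(d+1)`-dimensional metabelian `ℤ_p`-Lie
lattices `L, M` with good bases and matrices `A, B`: if the matrix `F̄` of a module
homomorphism `φ : M → L` satisfies `F_{0i} = 0` for all `i ∈ {1,…,d}`, then `φ` is a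
Lie algebra homomorphism iff `F B = F₀₀ A F`, where `F` is the lower-right `d×d`
block of `F̄`. -/
theorem stmt_15 (p : ℕ) [Fact p.Prime] (d : ℕ)
    (L M : Type*) [LieRing L] [LieAlgebra ℤ_[p] L] [LieRing M] [LieAlgebra ℤ_[p] M]
    (bx : Module.Basis (Fin (d + 1)) ℤ_[p] L)
    (A : Matrix (Fin d) (Fin d) ℤ_[p])
    (hxab : ∀ i j : Fin d, ⁅bx i.succ, bx j.succ⁆ = 0)
    (hx0 : ∀ i : Fin d, ⁅bx (0 : Fin (d + 1)), bx i.succ⁆ = ∑ l : Fin d, A l i • bx l.succ)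
    (bY : Module.Basis (Fin (d + 1)) ℤ_[p] M)
    (B : Matrix (Fin d) (Fin d) ℤ_[p])
    (hyab : ∀ i j : Fin d, ⁅bY i.succ, bY j.succ⁆ = 0)
    (hy0 : ∀ i : Fin d, ⁅bY (0 : Fin (d + 1)), bY i.succ⁆ = ∑ l : Fin d, B l i • bY l.succ)
    (φ : M →ₗ[ℤ_[p]] L)
    (Fbar : Matrix (Fin (d + 1)) (Fin (d + 1)) ℤ_[p])
    (hF : ∀ β, φ (bY β) = ∑ α, Fbar α β • bx α)
    (hF0 : ∀ i : Fin d, Fbar 0 i.succ = 0)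
    (F : Matrix (Fin d) (Fin d) ℤ_[p])
    (hFdef : ∀ i j : Fin d, F i j = Fbar i.succ j.succ) :
    (∀ u v : M, φ ⁅u, v⁆ = ⁅φ u, φ v⁆) ↔ F * B = Fbar 0 0 • (A * F) := by
  classical
  have coeff : ∀ (c c' : Fin d → ℤ_[p]),
      (∑ l, c l • bx l.succ) = (∑ l, c' l • bx l.succ) → ∀ m, c m = c' m := by
    intro c c' h m
    have h2 := congrArg (fun z => bx.repr z (m.succ)) h
    simpa [Finsupp.single_apply, Fin.succ_inj] using h2
  have hφsucc : ∀ j : Fin d, φ (bY j.succ) = ∑ l : Fin d, F l j • bx l.succ := by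
    intro j
    rw [hF, Fin.sum_univ_succ, hF0, zero_smul, zero_add]
    exact Finset.sum_congr rfl fun l _ => by rw [hFdef]
  have lem1 : ∀ j : Fin d, φ ⁅bY 0, bY j.succ⁆ = ∑ l : Fin d, (F * B) l j • bx l.succ := by
    intro j
    rw [hy0, map_sum]
    simp only [map_smul, hφsucc, Finset.smul_sum, smul_smul]
    rw [Finset.sum_comm]
    refine Finset.sum_congr rfl fun l _ => ?_
    rw [← Finset.sum_smul]
    congr 1
    rw [Matrix.mul_apply]
    exact Finset.sum_congr rfl fun k _ => mul_comm _ _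
  have lem2 : ∀ j : Fin d, ⁅φ (bY 0), φ (bY j.succ)⁆
      = ∑ l : Fin d, (Fbar 0 0 * (A * F) l j) • bx l.succ := by
    intro j
    rw [hF 0, hφsucc, my_sum_lie, Fin.sum_univ_succ]
    have hz : ∑ i : Fin d, ⁅Fbar i.succ 0 • bx i.succ, ∑ l : Fin d, F l j • bx l.succ⁆ = 0 := by
      refine Finset.sum_eq_zero fun i _ => ?_
      rw [smul_lie, my_lie_sum]
      simp [hxab]
    rw [hz, add_zero, smul_lie, my_lie_sum]
    simp only [lie_smul, hx0, Finset.smul_sum, smul_smul]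
    rw [Finset.sum_comm]
    refine Finset.sum_congr rfl fun l _ => ?_
    rw [← Finset.sum_smul]
    congr 1
    rw [Matrix.mul_apply, Finset.mul_sum]
    exact Finset.sum_congr rfl fun k _ => by ring
  constructor
  · intro h
    ext l j
    have := coeff _ _ ((lem1 j).symm.trans ((h (bY 0) (bY j.succ)).trans (lem2 j))) l
    simpa [Matrix.smul_apply, smul_eq_mul] using this
  · intro h
    have key : ∀ α β : Fin (d + 1), φ ⁅bY α, bY β⁆ = ⁅φ (bY α), φ (bY β)⁆ := by
      intro α β
      induction α using Fin.cases with
      | zero =>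
        induction β using Fin.cases with
        | zero => simp
        | succ j =>
          rw [lem1, lem2]
          refine Finset.sum_congr rfl fun l _ => ?_
          congr 1
          have := congrFun (congrFun h l) j
          simpa [Matrix.smul_apply, smul_eq_mul] using this
      | succ i =>
        induction β using Fin.cases with
        | zero =>
          rw [← lie_skew, ← lie_skew (φ (bY i.succ)), map_neg]
          congr 1
          · rw [lem1, lem2]
            refine Finset.sum_congr rfl fun l _ => ?_
            congr 1
            have := congrFun (congrFun h l) i
            simpa [Matrix.smul_apply, smul_eq_mul] using this
        | succ j =>
          rw [hyab, map_zero, hφsucc, hφsucc, my_sum_lie]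
          refine (Finset.sum_eq_zero fun k _ => ?_).symm
          rw [smul_lie, my_lie_sum]
          simp [hxab]
    intro u v
    conv_lhs => rw [← bY.sum_repr u, ← bY.sum_repr v]
    conv_rhs => rw [← bY.sum_repr u, ← bY.sum_repr v]
    simp only [my_sum_lie, my_lie_sum, smul_lie, lie_smul, map_sum, map_smul, key]
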